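/- For ω, ω' ∈ {0,1}^m and the multi-triangle densities g_{L,ω,h}, g_{L,ω',h} on [0,1] with disjoint bump supports (h ≤ 1/(2(m+1))), the total variation distance satisfies TV(P_{g_{L,ω,h}}, P_{g_{L,ω',h}}) ≤ (1/2)(| ‖ω‖₁ - ‖ω'‖₁ | + d_H(ω,ω')) L h² ≤ m L h², where d_H denotes Hamming distance. -/

import Mathlib

open MeasureTheory Set

noncomputable def triK (L h t : ℝ) : ℝ := max (L * (h - |t|)) 0

def wOne {m : ℕ} (ω : Fin m → Bool) : ℕ := (Finset.univ.filter fun i => ω i = true).card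

/-- Hamming distance between `ω, ω' ∈ {0,1}^m`. -/
def hamDist {m : ℕ} (ω ω' : Fin m → Bool) : ℕ :=
  (Finset.univ.filter fun i => ω i ≠ ω' i).card

noncomputable def gMulti (L h : ℝ) (m : ℕ) (ω : Fin m → Bool) (t : ℝ) : ℝ :=
  1 - (wOne ω : ℝ) * L * h ^ 2 +
    ∑ i : Fin m, (if ω i then (1 : ℝ) else 0) * triK L h (t - ((i : ℕ) + 1) / ((m : ℕ) + 1))

lemma triK_nonneg (L h t : ℝ) : 0 ≤ triK L h t := le_max_right _ _

lemma continuous_triK (L h : ℝ) : Continuous (triK L h) :=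
  (continuous_const.mul (continuous_const.sub continuous_abs)).max continuous_const

lemma triK_eq_zero (L h t : ℝ) (hL : 0 < L) (ht : h ≤ |t|) : triK L h t = 0 := by
  unfold triK
  apply max_eq_right
  nlinarith [abs_nonneg t]

lemma integrable_triK_shift (L h c : ℝ) (hL : 0 < L) :
    Integrable (fun t => triK L h (t - c)) := by
  apply Continuous.integrable_of_hasCompactSupport
  · exact (continuous_triK L h).comp (continuous_id.sub continuous_const)
  · apply HasCompactSupport.intro (isCompact_Icc (a := c - h) (b := c + h))
    intro x hx
    rw [mem_Icc] at hx
    push_neg at hx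
    apply triK_eq_zero _ _ _ hL
    rcases abs_cases (x - c) with ⟨h1, h2⟩ | ⟨h1, h2⟩
    · rcases le_or_gt (c - h) x with h3 | h3
      · linarith [hx h3]
      · linarith
    · rcases le_or_gt (c - h) x with h3 | h3
      · linarith [hx h3]
      · linarith

lemma integral_abs_interval (h : ℝ) (hh : 0 ≤ h) :
    ∫ t in (-h)..h, |t| = h ^ 2 := by
  have hi1 : IntervalIntegrable (fun t : ℝ => |t|) volume (-h) 0 :=
    continuous_abs.intervalIntegrable _ _
  have hi2 : IntervalIntegrable (fun t : ℝ => |t|) volume 0 h :=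
    continuous_abs.intervalIntegrable _ _
  rw [← intervalIntegral.integral_add_adjacent_intervals hi1 hi2]
  have h1 : ∫ t in (-h)..(0:ℝ), |t| = ∫ t in (-h)..(0:ℝ), -t := by
    apply intervalIntegral.integral_congr
    intro t ht
    rw [Set.uIcc_of_le (by linarith)] at ht
    exact abs_of_nonpos ht.2
  have h2 : ∫ t in (0:ℝ)..h, |t| = ∫ t in (0:ℝ)..h, t := by
    apply intervalIntegral.integral_congr
    intro t ht
    rw [Set.uIcc_of_le hh] at ht
    exact abs_of_nonneg ht.1
  rw [h1, h2, intervalIntegral.integral_neg, integral_id, integral_id]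
  ring

lemma integral_triK (L h : ℝ) (hL : 0 < L) (hh : 0 < h) :
    ∫ t, triK L h t = L * h ^ 2 := by
  have hind : ∀ t, triK L h t = (Icc (-h) h).indicator (fun t => L * (h - |t|)) t := by
    intro t
    by_cases ht : t ∈ Icc (-h) h
    · rw [indicator_of_mem ht]
      rw [mem_Icc] at ht
      have : |t| ≤ h := abs_le.mpr ht
      unfold triK
      apply max_eq_left
      nlinarith
    · rw [indicator_of_notMem ht]
      rw [mem_Icc] at ht
      push_neg at ht
      apply triK_eq_zero _ _ _ hL
      rcases abs_cases t with ⟨h1, h2⟩ | ⟨h1, h2⟩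
      · rcases le_or_gt (-h) t with h3 | h3
        · linarith [ht h3]
        · linarith
      · rcases le_or_gt (-h) t with h3 | h3
        · linarith [ht h3]
        · linarith
  simp_rw [hind]
  rw [MeasureTheory.integral_indicator measurableSet_Icc,
    MeasureTheory.integral_Icc_eq_integral_Ioc,
    ← intervalIntegral.integral_of_le (by linarith : -h ≤ h)]
  rw [intervalIntegral.integral_const_mul]
  have : ∫ t in (-h)..h, (h - |t|) =
      (∫ t in (-h)..h, h) - ∫ t in (-h)..h, |t| :=
    intervalIntegral.integral_sub (continuous_const.intervalIntegrable _ _)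
      (continuous_abs.intervalIntegrable _ _)
  rw [this, integral_abs_interval h hh.le, intervalIntegral.integral_const,
    smul_eq_mul]
  ring

lemma integral_triK_shift (L h c : ℝ) (hL : 0 < L) (hh : 0 < h) :
    ∫ t, triK L h (t - c) = L * h ^ 2 := by
  rw [MeasureTheory.integral_sub_right_eq_self (fun t => triK L h t) c]
  exact integral_triK L h hL hh


/-- Total variation bound between multi-triangle densities: `TV = (1/2)∫|g - g'|`
is at most `(1/2)(|‖ω‖₁ - |ω'‖₁| + d_H(ω,ω')) L h²`, itself at most `m L h²`. -/
theorem tv_gMulti_le (m : ℕ) (hm : 1 ≤ m) (ω ω' : Fin m → Bool)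
    (L h : ℝ) (hL : 0 < L) (hh : 0 < h) (hh2 : h ≤ 1 / (2 * ((m : ℝ) + 1)))
    (hval : (wOne ω : ℝ) * L * h ^ 2 ≤ 1) (hval' : (wOne ω' : ℝ) * L * h ^ 2 ≤ 1) :
    (1 / 2) * (∫ t in Set.Icc (0 : ℝ) 1, |gMulti L h m ω t - gMulti L h m ω' t|)
        ≤ (1 / 2) * (|(wOne ω : ℝ) - (wOne ω' : ℝ)| + (hamDist ω ω' : ℝ)) * L * h ^ 2 ∧
      (1 / 2) * (|(wOne ω : ℝ) - (wOne ω' : ℝ)| + (hamDist ω ω' : ℝ)) * L * h ^ 2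
        ≤ (m : ℝ) * L * h ^ 2 := by
  set W : ℝ := |(wOne ω : ℝ) - (wOne ω' : ℝ)| with hW
  set c : Fin m → ℝ := fun i => ((i : ℕ) + 1) / ((m : ℕ) + 1) with hc
  set d : Fin m → ℝ := fun i => if ω i = ω' i then 0 else 1 with hd
  have hLh2 : 0 ≤ L * h ^ 2 := by positivity
  -- pointwise bound
  have hdiff : ∀ t, |gMulti L h m ω t - gMulti L h m ω' t| ≤
      W * (L * h ^ 2) + ∑ i, d i * triK L h (t - c i) := by
    intro t
    have heq : gMulti L h m ω t - gMulti L h m ω' t =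
        ((wOne ω' : ℝ) - (wOne ω : ℝ)) * (L * h ^ 2) +
        ∑ i, ((if ω i then (1:ℝ) else 0) - (if ω' i then 1 else 0)) * triK L h (t - c i) := by
      simp only [gMulti, hc, sub_mul, Finset.sum_sub_distrib]
      ring
    rw [heq]
    refine (abs_add_le _ _).trans (add_le_add ?_ ?_)
    · rw [abs_mul, abs_of_nonneg hLh2, abs_sub_comm]
    · refine (Finset.abs_sum_le_sum_abs _ _).trans (Finset.sum_le_sum fun i _ => ?_)
      rw [abs_mul, abs_of_nonneg (triK_nonneg _ _ _)]
      apply mul_le_mul_of_nonneg_right _ (triK_nonneg _ _ _)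
      rcases Bool.eq_false_or_eq_true (ω i) with h1 | h1 <;>
        rcases Bool.eq_false_or_eq_true (ω' i) with h2 | h2 <;>
        simp [hd, h1, h2]
  -- integrability
  have hint1 : IntegrableOn (fun t => |gMulti L h m ω t - gMulti L h m ω' t|)
      (Icc (0:ℝ) 1) := by
    apply Continuous.integrableOn_Icc
    apply Continuous.abs
    apply Continuous.sub <;>
    · unfold gMulti
      apply Continuous.add continuous_const
      apply continuous_finset_sum
      intro i _
      exact continuous_const.mul ((continuous_triK L h).comp
        (continuous_id.sub continuous_const))
  have hint2 : IntegrableOn (fun t => W * (L * h ^ 2) + ∑ i, d i * triK L h (t - c i))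
      (Icc (0:ℝ) 1) := by
    apply Continuous.integrableOn_Icc
    apply Continuous.add continuous_const
    apply continuous_finset_sum
    intro i _
    exact continuous_const.mul ((continuous_triK L h).comp
      (continuous_id.sub continuous_const))
  have hmono : (∫ t in Icc (0:ℝ) 1, |gMulti L h m ω t - gMulti L h m ω' t|)
      ≤ ∫ t in Icc (0:ℝ) 1, (W * (L * h ^ 2) + ∑ i, d i * triK L h (t - c i)) :=
    setIntegral_mono_on hint1 hint2 measurableSet_Icc (fun t _ => hdiff t)
  -- compute/bound the RHS integral
  have hvol : (volume (Icc (0:ℝ) 1)).toReal = 1 := by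
    simp [Real.volume_Icc]
  have hsplit : (∫ t in Icc (0:ℝ) 1, (W * (L * h ^ 2) + ∑ i, d i * triK L h (t - c i)))
      = W * (L * h ^ 2) + ∑ i, d i * ∫ t in Icc (0:ℝ) 1, triK L h (t - c i) := by
    rw [MeasureTheory.integral_add (integrable_const _)]
    · congr 1
      · simp [Real.volume_Icc]
      · rw [MeasureTheory.integral_finset_sum]
        · exact Finset.sum_congr rfl fun i _ => MeasureTheory.integral_const_mul _ _
        · intro i _
          exact ((integrable_triK_shift L h (c i) hL).const_mul _).integrableOn
    · apply MeasureTheory.integrable_finset_sum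
      intro i _
      exact ((integrable_triK_shift L h (c i) hL).const_mul _).integrableOn
  have hKbound : ∀ i : Fin m, (∫ t in Icc (0:ℝ) 1, triK L h (t - c i)) ≤ L * h ^ 2 := by
    intro i
    rw [← integral_triK_shift L h (c i) hL hh]
    exact setIntegral_le_integral (integrable_triK_shift L h (c i) hL)
      (Filter.Eventually.of_forall fun t => triK_nonneg _ _ _)
  have hdnonneg : ∀ i, 0 ≤ d i := by
    intro i; by_cases h1 : ω i = ω' i <;> simp [hd, h1]
  have hdsum : ∑ i, d i = (hamDist ω ω' : ℝ) := by
    rw [hamDist, Finset.card_filter]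
    push_cast
    apply Finset.sum_congr rfl
    intro i _
    by_cases h1 : ω i = ω' i <;> simp [hd, h1]
  have hbound : (∫ t in Icc (0:ℝ) 1, |gMulti L h m ω t - gMulti L h m ω' t|)
      ≤ (W + (hamDist ω ω' : ℝ)) * (L * h ^ 2) := by
    refine hmono.trans ?_
    rw [hsplit, add_mul]
    apply add_le_add_right
    rw [← hdsum, Finset.sum_mul]
    exact Finset.sum_le_sum fun i _ =>
      mul_le_mul_of_nonneg_left (hKbound i) (hdnonneg i)
  constructor
  · calc (1/2) * (∫ t in Icc (0:ℝ) 1, |gMulti L h m ω t - gMulti L h m ω' t|)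
        ≤ (1/2) * ((W + (hamDist ω ω' : ℝ)) * (L * h ^ 2)) := by linarith
      _ = (1/2) * (W + (hamDist ω ω' : ℝ)) * L * h ^ 2 := by ring
  · have h1 : (wOne ω : ℝ) ≤ m := by
      have := Finset.card_filter_le (Finset.univ : Finset (Fin m)) (fun i => ω i = true)
      simp only [Finset.card_univ, Fintype.card_fin] at this
      exact_mod_cast this
    have h2 : (wOne ω' : ℝ) ≤ m := by
      have := Finset.card_filter_le (Finset.univ : Finset (Fin m)) (fun i => ω' i = true)
      simp only [Finset.card_univ, Fintype.card_fin] at this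
      exact_mod_cast this
    have h3 : (hamDist ω ω' : ℝ) ≤ m := by
      have := Finset.card_filter_le (Finset.univ : Finset (Fin m)) (fun i => ω i ≠ ω' i)
      simp only [Finset.card_univ, Fintype.card_fin] at this
      exact_mod_cast this
    have h4 : W ≤ m := by
      rw [hW]
      rw [abs_le]
      constructor
      · have : (0:ℝ) ≤ wOne ω := Nat.cast_nonneg _
        linarith
      · have : (0:ℝ) ≤ wOne ω' := Nat.cast_nonneg _
        linarith
    nlinarith [hLh2]
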